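/- For a fixed linear order (axis) on a set of m candidates (m ≥ 1), the number of linear orders (votes) on the candidates that are single-peaked with respect to this axis is exactly 2^(m-1). -/

import Mathlib

open Finset

/-- A vote `V` (linear order given by its rank function: `V c` is the rank of
candidate `c`, smaller rank = more preferred) is single-peaked with respect to the
axis `A` (also given by positions on the axis) if no three candidates form a valley:
`c₁ <_A c₂ <_A c₃` with `c₂` ranked below both `c₁` and `c₃`. -/
def SPwrt {m : ℕ} (V A : Equiv.Perm (Fin m)) : Prop :=
  ∀ c₁ c₂ c₃ : Fin m, ¬(A c₁ < A c₂ ∧ A c₂ < A c₃ ∧ V c₁ < V c₂ ∧ V c₃ < V c₂)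

namespace SPaux

variable {n : ℕ}

lemma sp_mul_iff (U A : Equiv.Perm (Fin (n+1))) :
    SPwrt (U * A) A ↔ SPwrt U 1 := by
  constructor
  · intro h x₁ x₂ x₃ hx
    refine h (A.symm x₁) (A.symm x₂) (A.symm x₃) ?_
    simpa [Equiv.Perm.mul_apply, Equiv.apply_symm_apply] using hx
  · intro h c₁ c₂ c₃ hc
    refine h (A c₁) (A c₂) (A c₃) ?_
    simpa [Equiv.Perm.mul_apply] using hc

lemma left_anti {V : Equiv.Perm (Fin (n+1))} (h : SPwrt V 1) {c c' : Fin (n+1)}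
    (hcc : c < c') (hc' : c' ≤ V.symm 0) : V c' < V c := by
  have hVp : V (V.symm 0) = 0 := V.apply_symm_apply 0
  rcases eq_or_lt_of_le hc' with h1 | h1
  · rw [h1, hVp]
    refine Fin.pos_of_ne_zero fun he => hcc.ne ?_
    have : c = V.symm 0 := by
      apply V.injective; rw [hVp, he]
    rw [this, ← h1]
  · by_contra hnot
    push_neg at hnot
    have hne : V c ≠ V c' := fun he => hcc.ne (V.injective he)
    have hlt : V c < V c' := lt_of_le_of_ne hnot hne
    have h0 : V (V.symm 0) < V c' := by
      rw [hVp]; exact lt_of_le_of_lt (Fin.zero_le _) hlt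
    exact h c c' (V.symm 0) ⟨by simpa using hcc, by simpa using h1, hlt, h0⟩

lemma right_mono {V : Equiv.Perm (Fin (n+1))} (h : SPwrt V 1) {c c' : Fin (n+1)}
    (hp : V.symm 0 ≤ c) (hcc : c < c') : V c < V c' := by
  have hVp : V (V.symm 0) = 0 := V.apply_symm_apply 0
  rcases eq_or_lt_of_le hp with h1 | h1
  · rw [← h1, hVp]
    refine Fin.pos_of_ne_zero fun he => hcc.ne' ?_
    have : c' = V.symm 0 := by
      apply V.injective; rw [hVp, he]
    rw [this, h1]
  · by_contra hnot
    push_neg at hnot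
    have hne : V c' ≠ V c := fun he => hcc.ne (V.injective he.symm)
    have hlt : V c' < V c := lt_of_le_of_ne hnot hne
    have h0 : V (V.symm 0) < V c := by
      rw [hVp]; exact lt_of_le_of_lt (Fin.zero_le _) hlt
    exact h (V.symm 0) c c' ⟨by simpa using h1, by simpa using hcc, h0, hlt⟩

/-- The rank written at position `P r` equals the number of positions below it. -/
lemma coe_eq_card (P : Equiv.Perm (Fin (n+1))) (r : Fin (n+1)) :
    (P r : ℕ) = (univ.filter (fun r' => P r' < P r)).card := by
  have h : univ.filter (fun r' => P r' < P r)
      = (Finset.Iio (P r)).map P.symm.toEmbedding := by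
    ext x
    simp only [mem_filter, mem_univ, true_and, Finset.mem_map, Finset.mem_Iio,
      Equiv.coe_toEmbedding]
    constructor
    · intro hx; exact ⟨P x, hx, P.symm_apply_apply x⟩
    · rintro ⟨y, hy, rfl⟩; simpa using hy
  rw [h, Finset.card_map, Fin.card_Iio]

def keyCard (S : Finset (Fin (n+1))) (r : Fin (n+1)) : ℕ :=
  if r ∈ S then (S.filter (fun r' => r < r')).card
  else if r = 0 then S.card
  else S.card + 1 + (univ.filter (fun r' : Fin (n+1) => r' ∉ S ∧ r' ≠ 0 ∧ r' < r)).card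

lemma keyCard_lt_card {S : Finset (Fin (n+1))} {r : Fin (n+1)} (hr : r ∈ S) :
    keyCard S r < S.card := by
  rw [keyCard, if_pos hr]
  apply Finset.card_lt_card
  rw [Finset.ssubset_iff_of_subset (Finset.filter_subset _ _)]
  exact ⟨r, hr, by simp⟩

lemma keyCard_zero {S : Finset (Fin (n+1))} (h0 : 0 ∉ S) :
    keyCard S 0 = S.card := by
  rw [keyCard, if_neg h0, if_pos rfl]

lemma card_lt_keyCard {S : Finset (Fin (n+1))} {r : Fin (n+1)}
    (hr : r ∉ S) (hr0 : r ≠ 0) : S.card < keyCard S r := by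
  rw [keyCard, if_neg hr, if_neg hr0]; omega

lemma keyCard_anti {S : Finset (Fin (n+1))} {r₁ r₂ : Fin (n+1)}
    (h1 : r₁ ∈ S) (h2 : r₂ ∈ S) (h12 : r₁ < r₂) :
    keyCard S r₂ < keyCard S r₁ := by
  simp only [keyCard, if_pos h1, if_pos h2]
  apply Finset.card_lt_card
  rw [Finset.ssubset_iff_of_subset
    (Finset.monotone_filter_right S (fun x _ hx => lt_trans h12 hx))]
  exact ⟨r₂, by simp [h2, h12], by simp⟩

lemma keyCard_mono {S : Finset (Fin (n+1))} {r₁ r₂ : Fin (n+1)}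
    (h1 : r₁ ∉ S) (h10 : r₁ ≠ 0) (h2 : r₂ ∉ S) (h20 : r₂ ≠ 0) (h12 : r₁ < r₂) :
    keyCard S r₁ < keyCard S r₂ := by
  simp only [keyCard, if_neg h1, if_neg h10, if_neg h2, if_neg h20]
  apply Nat.add_lt_add_left
  apply Finset.card_lt_card
  rw [Finset.ssubset_iff_of_subset
    (Finset.monotone_filter_right _ (fun x _ hx => ⟨hx.1, hx.2.1, lt_trans hx.2.2 h12⟩))]
  exact ⟨r₁, by simp [h1, h10, h12], by simp⟩

lemma keyCard_lt {S : Finset (Fin (n+1))} (h0 : 0 ∉ S) (r : Fin (n+1)) :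
    keyCard S r < n + 1 := by
  by_cases hr : r ∈ S
  · calc keyCard S r < S.card := keyCard_lt_card hr
      _ ≤ n + 1 := by simpa using Finset.card_le_univ S
  by_cases hr0 : r = 0
  · subst hr0
    rw [keyCard_zero h0]
    have : S ⊂ univ := Finset.ssubset_univ_iff.mpr
      (fun h => h0 (h ▸ Finset.mem_univ 0))
    simpa using Finset.card_lt_card this
  · rw [keyCard, if_neg hr, if_neg hr0]
    set T := univ.filter (fun r' : Fin (n+1) => r' ∉ S ∧ r' ≠ 0 ∧ r' < r) with hT
    have hd : Disjoint (insert 0 S) T := by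
      rw [Finset.disjoint_left]
      intro a ha hb
      rw [hT, Finset.mem_filter] at hb
      rcases Finset.mem_insert.mp ha with h | h
      · exact hb.2.2.1 h
      · exact hb.2.1 h
    have hr' : r ∉ insert 0 S ∪ T := by
      simp only [Finset.mem_union, Finset.mem_insert, hT, Finset.mem_filter]
      push_neg
      exact ⟨⟨hr0, hr⟩, fun _ _ _ => le_refl r⟩
    have h1 : (insert r ((insert 0 S) ∪ T)).card ≤ n + 1 := by
      have := Finset.card_le_univ (insert r ((insert 0 S) ∪ T))
      simpa using this
    rw [Finset.card_insert_of_notMem hr', Finset.card_union_of_disjoint hd,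
      Finset.card_insert_of_notMem h0] at h1
    omega

lemma keyCard_ne_of_lt {S : Finset (Fin (n+1))} (h0 : 0 ∉ S) {r₁ r₂ : Fin (n+1)}
    (h12 : r₁ < r₂) : keyCard S r₁ ≠ keyCard S r₂ := by
  have h20 : r₂ ≠ 0 := fun he => by simp [he] at h12
  by_cases h1 : r₁ ∈ S <;> by_cases h2 : r₂ ∈ S
  · exact (keyCard_anti h1 h2 h12).ne'
  · exact (lt_trans (keyCard_lt_card h1) (card_lt_keyCard h2 h20)).ne
  · by_cases h10 : r₁ = 0
    · subst h10
      rw [keyCard_zero h0]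
      exact (keyCard_lt_card h2).ne'
    · exact (lt_trans (keyCard_lt_card h2) (card_lt_keyCard h1 h10)).ne'
  · by_cases h10 : r₁ = 0
    · subst h10
      rw [keyCard_zero h0]
      exact (card_lt_keyCard h2 h20).ne
    · exact (keyCard_mono h1 h10 h2 h20 h12).ne

noncomputable def Wperm (S : Finset (Fin (n+1))) (h0 : 0 ∉ S) : Equiv.Perm (Fin (n+1)) :=
  Equiv.ofBijective (fun r => (⟨keyCard S r, keyCard_lt h0 r⟩ : Fin (n+1)))
    (Finite.injective_iff_bijective.mp (by
      intro a b hab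
      rcases lt_trichotomy a b with h | h | h
      · exact absurd (congrArg Fin.val hab) (keyCard_ne_of_lt h0 h)
      · exact h
      · exact absurd (congrArg Fin.val hab).symm (keyCard_ne_of_lt h0 h)))

lemma Wperm_coe (S : Finset (Fin (n+1))) (h0 : 0 ∉ S) (r : Fin (n+1)) :
    (Wperm S h0 r : ℕ) = keyCard S r := rfl

noncomputable def Psi (S : Finset (Fin (n+1))) (h0 : 0 ∉ S) : Equiv.Perm (Fin (n+1)) :=
  (Wperm S h0).symm

lemma sp_Psi (S : Finset (Fin (n+1))) (h0 : 0 ∉ S) : SPwrt (Psi S h0) 1 := by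
  rintro c₁ c₂ c₃ ⟨h12, h23, v12, v32⟩
  simp only [Equiv.Perm.one_apply] at h12 h23
  set r₁ := Psi S h0 c₁ with hr₁
  set r₂ := Psi S h0 c₂ with hr₂
  set r₃ := Psi S h0 c₃ with hr₃
  have hc₁ : c₁ = Wperm S h0 r₁ := (Equiv.apply_symm_apply _ _).symm
  have hc₂ : c₂ = Wperm S h0 r₂ := (Equiv.apply_symm_apply _ _).symm
  have hc₃ : c₃ = Wperm S h0 r₃ := (Equiv.apply_symm_apply _ _).symm
  have k12 : keyCard S r₁ < keyCard S r₂ := by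
    rw [hc₁, hc₂] at h12
    simpa [Fin.lt_def, Wperm_coe] using h12
  have k23 : keyCard S r₂ < keyCard S r₃ := by
    rw [hc₂, hc₃] at h23
    simpa [Fin.lt_def, Wperm_coe] using h23
  have h20 : r₂ ≠ 0 := fun he => by simp [he] at v12
  by_cases h2S : r₂ ∈ S
  · by_cases h1S : r₁ ∈ S
    · exact lt_asymm k12 (keyCard_anti h1S h2S v12)
    · by_cases h10 : r₁ = 0
      · rw [h10, keyCard_zero h0] at k12
        exact absurd (keyCard_lt_card h2S) (not_lt.mpr (le_of_lt k12))
      · exact lt_asymm k12 (lt_trans (keyCard_lt_card h2S) (card_lt_keyCard h1S h10))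
  · by_cases h3S : r₃ ∈ S
    · exact lt_asymm k23 (lt_trans (keyCard_lt_card h3S) (card_lt_keyCard h2S h20))
    · by_cases h30 : r₃ = 0
      · rw [h30, keyCard_zero h0] at k23
        exact absurd (card_lt_keyCard h2S h20) (not_lt.mpr (le_of_lt k23))
      · exact lt_asymm k23 (keyCard_mono h3S h30 h2S h20 v32)

def leftSet (V : Equiv.Perm (Fin (n+1))) : Finset (Fin (n+1)) :=
  univ.filter (fun r => V.symm r < V.symm 0)

lemma zero_not_mem_leftSet (V : Equiv.Perm (Fin (n+1))) : 0 ∉ leftSet V := by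
  simp [leftSet]

lemma leftSet_Psi (S : Finset (Fin (n+1))) (h0 : 0 ∉ S) :
    leftSet (Psi S h0) = S := by
  ext r
  simp only [leftSet, mem_filter, mem_univ, true_and]
  simp only [Psi, Equiv.symm_symm]
  rw [Fin.lt_def, Wperm_coe, Wperm_coe, keyCard_zero h0]
  constructor
  · intro h
    by_contra hr
    by_cases hr0 : r = 0
    · rw [hr0, keyCard_zero h0] at h
      exact lt_irrefl _ h
    · exact lt_asymm h (card_lt_keyCard hr hr0)
  · exact keyCard_lt_card

lemma symm_coe_eq_keyCard {V : Equiv.Perm (Fin (n+1))} (h : SPwrt V 1) (r : Fin (n+1)) :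
    (V.symm r : ℕ) = keyCard (leftSet V) r := by
  set S := leftSet V with hS
  have hmem : ∀ x, x ∈ S ↔ V.symm x < V.symm 0 := fun x => by
    simp [hS, leftSet]
  by_cases hr0 : r = 0
  · subst hr0
    rw [keyCard_zero (zero_not_mem_leftSet V), coe_eq_card V.symm 0]
    congr 1
  by_cases hrS : r ∈ S
  · have hrp : V.symm r < V.symm 0 := (hmem r).mp hrS
    rw [keyCard, if_pos hrS, coe_eq_card V.symm r]
    congr 1
    ext r'
    simp only [mem_filter, mem_univ, true_and, hmem]
    constructor
    · intro hx
      refine ⟨lt_trans hx hrp, ?_⟩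
      simpa using left_anti h hx (le_of_lt hrp)
    · rintro ⟨h1, hrr'⟩
      rcases lt_trichotomy (V.symm r') (V.symm r) with hlt | heq | hgt
      · exact hlt
      · exact absurd (V.symm.injective heq) (fun he => hrr'.ne he.symm)
      · have := left_anti h hgt (le_of_lt h1)
        simp only [Equiv.apply_symm_apply] at this
        exact absurd hrr' (lt_asymm this)
  · have hp : V.symm 0 < V.symm r := by
      rcases lt_trichotomy (V.symm r) (V.symm 0) with h1 | h1 | h1
      · exact absurd ((hmem r).mpr h1) hrS
      · exact absurd (V.symm.injective h1) hr0
      · exact h1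
    rw [keyCard, if_neg hrS, if_neg hr0, coe_eq_card V.symm r]
    have hset : univ.filter (fun r' => V.symm r' < V.symm r)
        = (insert 0 S) ∪ (univ.filter fun r' : Fin (n+1) => r' ∉ S ∧ r' ≠ 0 ∧ r' < r) := by
      ext r'
      simp only [mem_filter, mem_univ, true_and, Finset.mem_union, Finset.mem_insert, hmem]
      constructor
      · intro hx
        rcases lt_trichotomy (V.symm r') (V.symm 0) with h1 | h1 | h1
        · exact Or.inl (Or.inr h1)
        · exact Or.inl (Or.inl (V.symm.injective h1))
        · refine Or.inr ⟨not_lt.mpr (le_of_lt h1), ?_, ?_⟩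
          · intro he; rw [he] at h1; exact lt_irrefl _ h1
          · have := right_mono h (le_of_lt h1) hx
            simpa using this
      · rintro (h1 | ⟨hn, hn0, hlt⟩)
        · rcases h1 with h1 | h1
          · rw [h1]; exact hp
          · exact lt_trans h1 hp
        · have hp' : V.symm 0 < V.symm r' := by
            rcases lt_trichotomy (V.symm r') (V.symm 0) with h1 | h1 | h1
            · exact absurd h1 hn
            · exact absurd (V.symm.injective h1) hn0
            · exact h1
          rcases lt_trichotomy (V.symm r') (V.symm r) with h1 | h1 | h1
          · exact h1
          · exact absurd (V.symm.injective h1) hlt.ne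
          · have := right_mono h (le_of_lt hp) h1
            simp only [Equiv.apply_symm_apply] at this
            exact absurd hlt (lt_asymm this)
    have hd : Disjoint (insert 0 S)
        (univ.filter fun r' : Fin (n+1) => r' ∉ S ∧ r' ≠ 0 ∧ r' < r) := by
      rw [Finset.disjoint_left]
      intro a ha hb
      rw [Finset.mem_filter] at hb
      rcases Finset.mem_insert.mp ha with h | h
      · exact hb.2.2.1 h
      · exact hb.2.1 h
    rw [hset, Finset.card_union_of_disjoint hd,
      Finset.card_insert_of_notMem (zero_not_mem_leftSet V)]

lemma Psi_leftSet {V : Equiv.Perm (Fin (n+1))} (h : SPwrt V 1) :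
    Psi (leftSet V) (zero_not_mem_leftSet V) = V := by
  have hW : Wperm (leftSet V) (zero_not_mem_leftSet V) = V.symm := by
    apply Equiv.ext
    intro r
    apply Fin.ext
    rw [Wperm_coe, symm_coe_eq_keyCard h r]
  rw [Psi, hW, Equiv.symm_symm]

lemma card_sp_one : Nat.card {U : Equiv.Perm (Fin (n+1)) // SPwrt U 1} = 2 ^ n := by
  have e : {U : Equiv.Perm (Fin (n+1)) // SPwrt U 1}
      ≃ {S : Finset (Fin (n+1)) // 0 ∉ S} :=
    { toFun := fun U => ⟨leftSet U.1, zero_not_mem_leftSet U.1⟩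
      invFun := fun S => ⟨Psi S.1 S.2, sp_Psi S.1 S.2⟩
      left_inv := fun U => by
        apply Subtype.ext
        simpa using Psi_leftSet U.2
      right_inv := fun S => by
        apply Subtype.ext
        simpa using leftSet_Psi S.1 S.2 }
  rw [Nat.card_congr e, Nat.card_eq_fintype_card, Fintype.card_subtype]
  have hps : univ.filter (fun S : Finset (Fin (n+1)) => 0 ∉ S)
      = (univ.erase (0 : Fin (n+1))).powerset := by
    ext S
    simp [Finset.mem_powerset, Finset.subset_erase]
  rw [hps, Finset.card_powerset, Finset.card_erase_of_mem (mem_univ _),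
    Finset.card_univ, Fintype.card_fin, Nat.add_sub_cancel]

end SPaux

/-- For a fixed axis on `m ≥ 1` candidates, exactly `2^(m-1)` votes are
single-peaked with respect to this axis. -/
theorem count_votes_single_peaked_wrt_axis (m : ℕ) (hm : 1 ≤ m)
    (A : Equiv.Perm (Fin m)) :
    {V : Equiv.Perm (Fin m) | SPwrt V A}.ncard = 2 ^ (m - 1) := by
  obtain ⟨n, rfl⟩ : ∃ n, m = n + 1 := ⟨m - 1, (Nat.succ_pred_eq_of_pos hm).symm⟩
  rw [← Nat.card_coe_set_eq]
  have e1 : {U : Equiv.Perm (Fin (n+1)) // SPwrt U 1}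
      ≃ {V : Equiv.Perm (Fin (n+1)) // SPwrt V A} :=
    { toFun := fun U => ⟨U.1 * A, (SPaux.sp_mul_iff U.1 A).mpr U.2⟩
      invFun := fun V => ⟨V.1 * A⁻¹, by
        apply (SPaux.sp_mul_iff (V.1 * A⁻¹) A).mp
        have hV : V.1 * A⁻¹ * A = V.1 := by group
        rw [hV]
        exact V.2⟩
      left_inv := fun U => by
        apply Subtype.ext
        group
      right_inv := fun V => by
        apply Subtype.ext
        group }
  have : Nat.card {V : Equiv.Perm (Fin (n+1)) | SPwrt V A}
      = Nat.card {U : Equiv.Perm (Fin (n+1)) // SPwrt U 1} :=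
    Nat.card_congr e1.symm
  rw [this, SPaux.card_sp_one, Nat.add_sub_cancel]
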